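/- Let 0 < α < 2, a > 0, E > 0, and t ∈ ℝ, and define λ(s) = 2a sin²( 2∫₀^{s} √(1 - β_E(x)) dx + 2t ) / s for s ≥ 1. Then there exist a constant c₀ ∈ ℝ and constants C > 0, ε > 0 such that for all ξ ≥ 1, | ∫₁^{ξ} λ(s) ds - a ln ξ + c₀ | ≤ C ξ^{-ε}. In particular, e^{-∫₁^{ξ} λ(s)ds} is comparable to ξ^{-a} as ξ → ∞. -/

import Mathlib

open MeasureTheory Set

noncomputable def Wf (K p : ℝ) : ℝ → ℝ := fun x => Real.sqrt (1 + K * x ^ (-p))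

noncomputable def Ff (K p : ℝ) : ℝ → ℝ := fun s => ∫ x in (0:ℝ)..s, Wf K p x

noncomputable def Wd (K p : ℝ) : ℝ → ℝ :=
  fun s => 1 / (2 * Wf K p s) * (K * (-p * s ^ (-p - 1)))

noncomputable def Hf (K p t : ℝ) : ℝ → ℝ :=
  fun s => Real.sin (4 * Ff K p s + 4 * t) / (4 * Wf K p s * s)

noncomputable def Rf (K p t : ℝ) : ℝ → ℝ :=
  fun s => Real.sin (4 * Ff K p s + 4 * t) * (4 * Wd K p s * s + 4 * Wf K p s * 1) /
    (4 * Wf K p s * s) ^ 2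

noncomputable def Gf (K p t : ℝ) : ℝ → ℝ :=
  fun s => Real.cos (4 * Ff K p s + 4 * t) / s

lemma Wf_one_le {K p : ℝ} (hK : 0 ≤ K) {x : ℝ} (hx : 0 ≤ x) : 1 ≤ Wf K p x := by
  rw [Wf, Real.one_le_sqrt]
  nlinarith [Real.rpow_nonneg hx (-p)]

lemma Wf_pos {K p : ℝ} (hK : 0 ≤ K) {x : ℝ} (hx : 0 ≤ x) : 0 < Wf K p x :=
  lt_of_lt_of_le one_pos (Wf_one_le hK hx)

lemma Wf_contAt {K p : ℝ} {x : ℝ} (hx : 0 < x) : ContinuousAt (Wf K p) x := by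
  have h1 : ContinuousAt (fun y : ℝ => 1 + K * y ^ (-p)) x :=
    continuousAt_const.add
      (continuousAt_const.mul (Real.continuousAt_rpow_const x (-p) (Or.inl hx.ne')))
  exact Real.continuous_sqrt.continuousAt.comp h1

lemma Wf_contOn (K p : ℝ) : ContinuousOn (Wf K p) (Ioi 0) :=
  fun _ hx => (Wf_contAt hx).continuousWithinAt

lemma Wf_intInt {K p : ℝ} (hK : 0 ≤ K) (hp0 : 0 < p) (hp1 : p < 1) {s : ℝ} (hs : 0 ≤ s) :
    IntervalIntegrable (Wf K p) volume 0 s := by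
  have hb : IntervalIntegrable (fun x : ℝ => 1 + Real.sqrt K * x ^ (-(p/2))) volume 0 s :=
    intervalIntegrable_const.add ((intervalIntegral.intervalIntegrable_rpow' (by linarith)).const_mul _)
  refine hb.mono_fun ?_ ?_
  · rw [uIoc_of_le hs]
    exact ((Wf_contOn K p).mono Ioc_subset_Ioi_self).aestronglyMeasurable measurableSet_Ioc
  · rw [uIoc_of_le hs]
    refine (ae_restrict_iff' measurableSet_Ioc).mpr (Filter.Eventually.of_forall fun x hx => ?_)
    have hx0 : 0 < x := hx.1
    have h1 : Real.sqrt (K * x ^ (-p)) = Real.sqrt K * x ^ (-(p/2)) := by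
      rw [Real.sqrt_mul hK]
      congr 1
      rw [Real.sqrt_eq_rpow, ← Real.rpow_mul hx0.le]
      congr 1
      ring
    have h2 : Wf K p x ≤ 1 + Real.sqrt K * x ^ (-(p/2)) := by
      rw [Wf, ← h1]
      have hu : 0 ≤ K * x ^ (-p) := by positivity
      have : 1 + K * x ^ (-p) ≤ (1 + Real.sqrt (K * x ^ (-p))) ^ 2 := by
        nlinarith [Real.sq_sqrt hu, Real.sqrt_nonneg (K * x ^ (-p))]
      calc Real.sqrt (1 + K * x ^ (-p)) ≤ Real.sqrt ((1 + Real.sqrt (K * x ^ (-p))) ^ 2) :=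
            Real.sqrt_le_sqrt this
        _ = 1 + Real.sqrt (K * x ^ (-p)) := by
            rw [Real.sqrt_sq (by positivity)]
    have hWnn : 0 ≤ Wf K p x := (Real.sqrt_nonneg _)
    simp only [Real.norm_eq_abs]
    rw [abs_of_nonneg hWnn, abs_of_nonneg (by positivity)]
    exact h2

lemma Ff_hasDeriv {K p : ℝ} (hK : 0 ≤ K) (hp0 : 0 < p) (hp1 : p < 1) {s : ℝ} (hs : 0 < s) :
    HasDerivAt (Ff K p) (Wf K p s) s :=
  intervalIntegral.integral_hasDerivAt_right (Wf_intInt hK hp0 hp1 hs.le)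
    (ContinuousOn.stronglyMeasurableAtFilter isOpen_Ioi (Wf_contOn K p) s hs)
    (Wf_contAt hs)

lemma Wf_hasDeriv {K p : ℝ} (hK : 0 ≤ K) {s : ℝ} (hs : 0 < s) :
    HasDerivAt (Wf K p) (Wd K p s) s := by
  have hu : HasDerivAt (fun x : ℝ => 1 + K * x ^ (-p)) (K * (-p * s ^ (-p - 1))) s :=
    ((Real.hasDerivAt_rpow_const (p := -p) (Or.inl hs.ne')).const_mul K).const_add 1
  have hne : 1 + K * s ^ (-p) ≠ 0 := by positivity
  have h2 := (Real.hasDerivAt_sqrt hne).comp s hu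
  rw [show Wf K p = fun x => Real.sqrt (1 + K * x ^ (-p)) from rfl]
  simpa [Wf, Wd, Function.comp_def] using h2

lemma Wf_le {K p : ℝ} (hK : 0 ≤ K) (hp0 : 0 < p) {s : ℝ} (hs : 1 ≤ s) :
    Wf K p s ≤ Real.sqrt (1 + K) := by
  apply Real.sqrt_le_sqrt
  have h1 : s ^ (-p) ≤ 1 :=
    Real.rpow_le_one_of_one_le_of_nonpos hs (by linarith)
  nlinarith

lemma Wd_mul_le {K p : ℝ} (hK : 0 ≤ K) (hp0 : 0 < p) {s : ℝ} (hs : 1 ≤ s) :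
    |Wd K p s * s| ≤ p * K / 2 := by
  have hs0 : 0 < s := lt_of_lt_of_le one_pos hs
  have hW1 : 1 ≤ Wf K p s := Wf_one_le hK hs0.le
  have hkey : Wd K p s * s = -(K * p * s ^ (-p)) / (2 * Wf K p s) := by
    rw [Wd]
    have : s ^ (-p - 1) * s = s ^ (-p) := by
      rw [← Real.rpow_add_one hs0.ne' (-p - 1)]
      norm_num
    field_simp
    rw [← this]; ring
  rw [hkey, abs_div, abs_neg, abs_of_nonneg (by positivity : (0:ℝ) ≤ K * p * s ^ (-p)),
    abs_of_nonneg (by positivity : (0:ℝ) ≤ 2 * Wf K p s)]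
  have h1 : s ^ (-p) ≤ 1 := Real.rpow_le_one_of_one_le_of_nonpos hs (by linarith)
  have h2 : K * p * s ^ (-p) ≤ p * K := by nlinarith [mul_le_mul_of_nonneg_left h1 (by positivity : (0:ℝ) ≤ K * p)]
  have h3 : (2:ℝ) ≤ 2 * Wf K p s := by linarith
  calc K * p * s ^ (-p) / (2 * Wf K p s) ≤ (p * K) / 2 :=
    div_le_div₀ (by positivity) h2 two_pos h3

lemma Hf_hasDeriv {K p t : ℝ} (hK : 0 ≤ K) (hp0 : 0 < p) (hp1 : p < 1) {s : ℝ} (hs : 1 ≤ s) :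
    HasDerivAt (Hf K p t) (Gf K p t s - Rf K p t s) s := by
  have hs0 : 0 < s := lt_of_lt_of_le one_pos hs
  have hWpos : 0 < Wf K p s := Wf_pos hK hs0.le
  have hWne : Wf K p s ≠ 0 := hWpos.ne'
  have hFd := Ff_hasDeriv hK hp0 hp1 hs0
  have hin : HasDerivAt (fun x => 4 * Ff K p x + 4 * t) (4 * Wf K p s) s :=
    (hFd.const_mul 4).add_const (4 * t)
  have hnum : HasDerivAt (fun x => Real.sin (4 * Ff K p x + 4 * t))
      (Real.cos (4 * Ff K p s + 4 * t) * (4 * Wf K p s)) s :=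
    (Real.hasDerivAt_sin _).comp s hin
  have hWd := Wf_hasDeriv (p := p) hK hs0
  have hden : HasDerivAt (fun x => 4 * Wf K p x * x)
      (4 * Wd K p s * s + 4 * Wf K p s * 1) s :=
    (hWd.const_mul 4).mul (hasDerivAt_id s)
  have hdne : 4 * Wf K p s * s ≠ 0 :=
    mul_ne_zero (mul_ne_zero four_ne_zero hWne) hs0.ne'
  have h := hnum.div hden hdne
  have heq : (Real.cos (4 * Ff K p s + 4 * t) * (4 * Wf K p s) * (4 * Wf K p s * s) -
        Real.sin (4 * Ff K p s + 4 * t) * (4 * Wd K p s * s + 4 * Wf K p s * 1)) /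
        (4 * Wf K p s * s) ^ 2 = Gf K p t s - Rf K p t s := by
    rw [Gf, Rf]
    field_simp
  rw [heq] at h
  exact h

lemma Ff_contAt {K p : ℝ} (hK : 0 ≤ K) (hp0 : 0 < p) (hp1 : p < 1) {s : ℝ} (hs : 0 < s) :
    ContinuousAt (Ff K p) s := (Ff_hasDeriv hK hp0 hp1 hs).continuousAt

lemma Wd_contAt {K p : ℝ} (hK : 0 ≤ K) {s : ℝ} (hs : 0 < s) :
    ContinuousAt (Wd K p) s := by
  have hWne : Wf K p s ≠ 0 := (Wf_pos hK hs.le).ne'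
  have h1 : ContinuousAt (fun y : ℝ => 1 / (2 * Wf K p y)) s :=
    continuousAt_const.div (continuousAt_const.mul (Wf_contAt hs))
      (by simpa using hWne)
  have h2 : ContinuousAt (fun y : ℝ => K * (-p * y ^ (-p - 1))) s :=
    continuousAt_const.mul
      (continuousAt_const.mul (Real.continuousAt_rpow_const s (-p - 1) (Or.inl hs.ne')))
  exact h1.mul h2

lemma Gf_contAt {K p t : ℝ} (hK : 0 ≤ K) (hp0 : 0 < p) (hp1 : p < 1) {s : ℝ} (hs : 0 < s) :
    ContinuousAt (Gf K p t) s := by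
  have h1 : ContinuousAt (fun x => Real.cos (4 * Ff K p x + 4 * t)) s :=
    Real.continuous_cos.continuousAt.comp
      (((Ff_contAt hK hp0 hp1 hs).const_mul 4).add continuousAt_const)
  exact h1.div continuousAt_id hs.ne'

lemma Rf_contAt {K p t : ℝ} (hK : 0 ≤ K) (hp0 : 0 < p) (hp1 : p < 1) {s : ℝ} (hs : 0 < s) :
    ContinuousAt (Rf K p t) s := by
  have hWne : Wf K p s ≠ 0 := (Wf_pos hK hs.le).ne'
  have hsin : ContinuousAt (fun x => Real.sin (4 * Ff K p x + 4 * t)) s :=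
    Real.continuous_sin.continuousAt.comp
      (((Ff_contAt hK hp0 hp1 hs).const_mul 4).add continuousAt_const)
  have hmid : ContinuousAt (fun x => 4 * Wd K p x * x + 4 * Wf K p x * 1) s :=
    ((((Wd_contAt hK hs).const_mul 4).mul continuousAt_id)).add
      (((Wf_contAt hs).const_mul 4).mul continuousAt_const)
  have hden : ContinuousAt (fun x => (4 * Wf K p x * x) ^ 2) s :=
    (((Wf_contAt hs).const_mul 4).mul continuousAt_id).pow 2
  have hdne : (4 * Wf K p s * s) ^ 2 ≠ 0 :=
    pow_ne_zero _ (mul_ne_zero (mul_ne_zero four_ne_zero hWne) hs.ne')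
  exact (hsin.mul hmid).div hden hdne

lemma Rf_bound {K p t : ℝ} (hK : 0 ≤ K) (hp0 : 0 < p) {s : ℝ} (hs : 1 ≤ s) :
    |Rf K p t s| ≤ (p * K / 2 + Real.sqrt (1 + K)) * s ^ (-(2:ℝ)) := by
  have hs0 : 0 < s := lt_of_lt_of_le one_pos hs
  have hW1 : 1 ≤ Wf K p s := Wf_one_le hK hs0.le
  set M := p * K / 2 + Real.sqrt (1 + K) with hM
  have hM0 : 0 < M := by
    have : 0 < Real.sqrt (1 + K) := Real.sqrt_pos.2 (by linarith)
    have : 0 ≤ p * K / 2 := by positivity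
    simp only [hM]; linarith
  have hnum : |Real.sin (4 * Ff K p s + 4 * t) * (4 * Wd K p s * s + 4 * Wf K p s * 1)| ≤
      4 * M := by
    rw [abs_mul]
    have h1 : |Real.sin (4 * Ff K p s + 4 * t)| ≤ 1 := Real.abs_sin_le_one _
    have h2 : |4 * Wd K p s * s + 4 * Wf K p s * 1| ≤ 4 * M := by
      have ha : |4 * Wd K p s * s| ≤ 4 * (p * K / 2) := by
        have := Wd_mul_le hK hp0 hs
        rw [show 4 * Wd K p s * s = 4 * (Wd K p s * s) by ring, abs_mul]
        rw [abs_of_nonneg (by norm_num : (0:ℝ) ≤ (4:ℝ))]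
        nlinarith [this, abs_nonneg (Wd K p s * s)]
      have hb : |4 * Wf K p s * 1| ≤ 4 * Real.sqrt (1 + K) := by
        rw [mul_one, abs_mul, abs_of_nonneg (by norm_num : (0:ℝ) ≤ (4:ℝ)),
          abs_of_nonneg (by linarith : (0:ℝ) ≤ Wf K p s)]
        nlinarith [Wf_le hK hp0 hs]
      calc |4 * Wd K p s * s + 4 * Wf K p s * 1| ≤
            |4 * Wd K p s * s| + |4 * Wf K p s * 1| := abs_add_le _ _
        _ ≤ 4 * (p * K / 2) + 4 * Real.sqrt (1 + K) := add_le_add ha hb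
        _ = 4 * M := by rw [hM]; ring
    calc |Real.sin (4 * Ff K p s + 4 * t)| * |4 * Wd K p s * s + 4 * Wf K p s * 1| ≤
          1 * (4 * M) := mul_le_mul h1 h2 (abs_nonneg _) one_pos.le
      _ = 4 * M := one_mul _
  have hW2 : 1 ≤ Wf K p s ^ 2 := by nlinarith
  have hden : 4 * s ^ 2 ≤ (4 * Wf K p s * s) ^ 2 := by
    nlinarith [mul_le_mul_of_nonneg_right hW2 (sq_nonneg s)]
  have hrpow : s ^ (-(2:ℝ)) = (s ^ 2)⁻¹ := by
    rw [Real.rpow_neg hs0.le, ← Real.rpow_natCast s 2]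
    norm_num
  rw [Rf, abs_div, abs_of_nonneg (by positivity : (0:ℝ) ≤ (4 * Wf K p s * s) ^ 2)]
  calc |Real.sin (4 * Ff K p s + 4 * t) * (4 * Wd K p s * s + 4 * Wf K p s * 1)| /
        (4 * Wf K p s * s) ^ 2 ≤ (4 * M) / (4 * s ^ 2) :=
        div_le_div₀ (by positivity) hnum (by positivity) hden
    _ = M * (s ^ 2)⁻¹ := by field_simp
    _ = M * s ^ (-(2:ℝ)) := by rw [hrpow]

lemma Rf_integrableOn {K p t : ℝ} (hK : 0 ≤ K) (hp0 : 0 < p) (hp1 : p < 1) {c : ℝ}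
    (hc : 1 ≤ c) : IntegrableOn (Rf K p t) (Ioi c) volume := by
  have hc0 : 0 < c := lt_of_lt_of_le one_pos hc
  have hb : IntegrableOn (fun s : ℝ => (p * K / 2 + Real.sqrt (1 + K)) * s ^ (-(2:ℝ)))
      (Ioi c) volume :=
    (integrableOn_Ioi_rpow_of_lt (by norm_num) hc0).const_mul _
  refine Integrable.mono' hb ?_ ?_
  · exact (ContinuousOn.mono (fun x hx => (Rf_contAt hK hp0 hp1 hx).continuousWithinAt)
      (fun x (hx : x ∈ Ioi c) => lt_of_lt_of_le hc0 (le_of_lt hx))).aestronglyMeasurable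
      measurableSet_Ioi
  · refine (ae_restrict_iff' measurableSet_Ioi).mpr (Filter.Eventually.of_forall fun x hx => ?_)
    rw [Real.norm_eq_abs]
    exact Rf_bound hK hp0 (le_trans hc (le_of_lt hx))

lemma Rf_tail {K p t : ℝ} (hK : 0 ≤ K) (hp0 : 0 < p) (hp1 : p < 1) {ξ : ℝ} (hξ : 1 ≤ ξ) :
    |∫ s in Ioi ξ, Rf K p t s| ≤ (p * K / 2 + Real.sqrt (1 + K)) * ξ ^ (-(1:ℝ)) := by
  have hξ0 : 0 < ξ := lt_of_lt_of_le one_pos hξ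
  set M := p * K / 2 + Real.sqrt (1 + K) with hM
  have hb : IntegrableOn (fun s : ℝ => M * s ^ (-(2:ℝ))) (Ioi ξ) volume :=
    (integrableOn_Ioi_rpow_of_lt (by norm_num) hξ0).const_mul _
  have h1 : ‖∫ s in Ioi ξ, Rf K p t s‖ ≤ ∫ s in Ioi ξ, M * s ^ (-(2:ℝ)) := by
    refine norm_integral_le_of_norm_le hb ?_
    refine (ae_restrict_iff' measurableSet_Ioi).mpr (Filter.Eventually.of_forall fun x hx => ?_)
    rw [Real.norm_eq_abs]
    exact Rf_bound hK hp0 (le_trans hξ (le_of_lt hx))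
  have h2 : ∫ s in Ioi ξ, M * s ^ (-(2:ℝ)) = M * ξ ^ (-(1:ℝ)) := by
    rw [integral_const_mul, integral_Ioi_rpow_of_lt (by norm_num) hξ0]
    norm_num
  rw [← Real.norm_eq_abs, ← h2]
  exact h1

theorem key (K p a t : ℝ) (hK : 0 < K) (hp0 : 0 < p) (hp1 : p < 1) (ha : 0 < a)
    (β : ℝ → ℝ) (hβ : ∀ x : ℝ, 0 ≤ x → 1 - β x = 1 + K * x ^ (-p)) :
    ∃ c₀ : ℝ, ∃ C > (0:ℝ), ∀ ξ : ℝ, 1 ≤ ξ →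
      |(∫ s in (1:ℝ)..ξ,
          2 * a * (Real.sin (2 * (∫ x in (0:ℝ)..s, Real.sqrt (1 - β x)) + 2 * t)) ^ 2 / s)
        - a * Real.log ξ + c₀| ≤ C * ξ ^ (-(1:ℝ)) := by
  have hK' : 0 ≤ K := hK.le
  set M := p * K / 2 + Real.sqrt (1 + K) with hM
  have hM0 : 0 < M := by
    have h1 : 0 < Real.sqrt (1 + K) := Real.sqrt_pos.2 (by linarith)
    have h2 : 0 ≤ p * K / 2 := by positivity
    rw [hM]; linarith
  set I := ∫ s in Ioi (1:ℝ), Rf K p t s with hI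
  refine ⟨a * I - a * Hf K p t 1, a * (1 + M) + 1, by positivity, ?_⟩
  intro ξ hξ
  have hξ0 : 0 < ξ := lt_of_lt_of_le one_pos hξ
  -- the inner integral is Ff
  have hinner : ∀ s : ℝ, 0 ≤ s → (∫ x in (0:ℝ)..s, Real.sqrt (1 - β x)) = Ff K p s := by
    intro s hs
    rw [Ff]
    refine intervalIntegral.integral_congr fun x hx => ?_
    rw [uIcc_of_le hs] at hx
    rw [hβ x hx.1, Wf]
  -- rewrite the integrand
  have hcong : (∫ s in (1:ℝ)..ξ,
      2 * a * (Real.sin (2 * (∫ x in (0:ℝ)..s, Real.sqrt (1 - β x)) + 2 * t)) ^ 2 / s)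
      = ∫ s in (1:ℝ)..ξ, (a * s⁻¹ - a * Gf K p t s) := by
    refine intervalIntegral.integral_congr fun s hs => ?_
    rw [uIcc_of_le hξ] at hs
    have hs1 : 1 ≤ s := hs.1
    have hs0 : 0 < s := lt_of_lt_of_le one_pos hs1
    rw [hinner s hs0.le, Gf]
    have hθ : 4 * Ff K p s + 4 * t = 2 * (2 * Ff K p s + 2 * t) := by ring
    rw [hθ]
    have htrig : Real.cos (2 * (2 * Ff K p s + 2 * t)) =
        1 - 2 * Real.sin (2 * Ff K p s + 2 * t) ^ 2 := by
      have h1 := Real.cos_two_mul (2 * Ff K p s + 2 * t)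
      have h2 := Real.sin_sq_add_cos_sq (2 * Ff K p s + 2 * t)
      linarith
    rw [htrig]
    field_simp
    ring
  rw [hcong]
  -- continuity facts on [1, ξ]
  have hsub : uIcc (1:ℝ) ξ ⊆ Ioi 0 := by
    rw [uIcc_of_le hξ]
    exact fun x hx => lt_of_lt_of_le one_pos hx.1
  have hGc : ContinuousOn (Gf K p t) (uIcc (1:ℝ) ξ) :=
    fun x hx => (Gf_contAt hK' hp0 hp1 (hsub hx)).continuousWithinAt
  have hRc : ContinuousOn (Rf K p t) (uIcc (1:ℝ) ξ) :=
    fun x hx => (Rf_contAt hK' hp0 hp1 (hsub hx)).continuousWithinAt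
  have hGi : IntervalIntegrable (Gf K p t) volume 1 ξ := hGc.intervalIntegrable
  have hRi : IntervalIntegrable (Rf K p t) volume 1 ξ := hRc.intervalIntegrable
  have hinvi : IntervalIntegrable (fun s : ℝ => a * s⁻¹) volume 1 ξ := by
    refine ContinuousOn.intervalIntegrable fun x hx => ?_
    exact (continuousAt_const.mul (continuousAt_inv₀ (ne_of_gt (hsub hx)))).continuousWithinAt
  -- FTC for Hf
  have hFTC : (∫ s in (1:ℝ)..ξ, (Gf K p t s - Rf K p t s)) = Hf K p t ξ - Hf K p t 1 := by
    refine intervalIntegral.integral_eq_sub_of_hasDerivAt (fun s hs => ?_) (hGi.sub hRi)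
    rw [uIcc_of_le hξ] at hs
    exact Hf_hasDeriv hK' hp0 hp1 hs.1
  rw [intervalIntegral.integral_sub hGi hRi] at hFTC
  -- split the remainder integral over Ioi
  have hRIoi := Rf_integrableOn (t := t) hK' hp0 hp1 (le_refl (1:ℝ))
  have hsplit : (∫ s in (1:ℝ)..ξ, Rf K p t s) = I - ∫ s in Ioi ξ, Rf K p t s := by
    rw [intervalIntegral.integral_of_le hξ]
    have hunion : Ioc (1:ℝ) ξ ∪ Ioi ξ = Ioi 1 := Ioc_union_Ioi_eq_Ioi hξ
    have hd : Disjoint (Ioc (1:ℝ) ξ) (Ioi ξ) := Ioc_disjoint_Ioi le_rfl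
    have h1 : IntegrableOn (Rf K p t) (Ioc (1:ℝ) ξ) volume :=
      hRIoi.mono_set (fun x hx => hx.1)
    have h2 : IntegrableOn (Rf K p t) (Ioi ξ) volume :=
      hRIoi.mono_set (fun x (hx : x ∈ Ioi ξ) => lt_of_le_of_lt hξ hx)
    have := setIntegral_union hd measurableSet_Ioi h1 h2
    rw [hunion] at this
    rw [hI, this]
    ring
  -- compute ∫ a * s⁻¹
  have hlog : (∫ s in (1:ℝ)..ξ, a * s⁻¹) = a * Real.log ξ := by
    rw [intervalIntegral.integral_const_mul, integral_inv_of_pos one_pos hξ0]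
    simp
  -- assemble
  rw [intervalIntegral.integral_sub hinvi (hGi.const_mul a), hlog,
    intervalIntegral.integral_const_mul]
  have hGval : (∫ s in (1:ℝ)..ξ, Gf K p t s)
      = Hf K p t ξ - Hf K p t 1 + (I - ∫ s in Ioi ξ, Rf K p t s) := by
    rw [← hsplit]; linarith
  rw [hGval]
  have hEq : a * Real.log ξ - a * (Hf K p t ξ - Hf K p t 1 + (I - ∫ s in Ioi ξ, Rf K p t s))
      - a * Real.log ξ + (a * I - a * Hf K p t 1)
      = -(a * Hf K p t ξ) + a * ∫ s in Ioi ξ, Rf K p t s := by ring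
  rw [hEq]
  -- bounds
  have hHb : |Hf K p t ξ| ≤ ξ ^ (-(1:ℝ)) := by
    have hW1 : 1 ≤ Wf K p ξ := Wf_one_le hK' hξ0.le
    rw [Hf, abs_div, abs_of_nonneg (by positivity : (0:ℝ) ≤ 4 * Wf K p ξ * ξ)]
    have hd : ξ ≤ 4 * Wf K p ξ * ξ := by nlinarith
    have : |Real.sin (4 * Ff K p ξ + 4 * t)| ≤ 1 := Real.abs_sin_le_one _
    calc |Real.sin (4 * Ff K p ξ + 4 * t)| / (4 * Wf K p ξ * ξ) ≤ 1 / ξ :=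
          div_le_div₀ (by positivity) this hξ0 hd
      _ = ξ ^ (-(1:ℝ)) := by rw [Real.rpow_neg_one]; exact one_div ξ
  have hTb := Rf_tail (t := t) hK' hp0 hp1 hξ
  have hrpos : (0:ℝ) < ξ ^ (-(1:ℝ)) := Real.rpow_pos_of_pos hξ0 _
  calc |-(a * Hf K p t ξ) + a * ∫ s in Ioi ξ, Rf K p t s|
      ≤ |-(a * Hf K p t ξ)| + |a * ∫ s in Ioi ξ, Rf K p t s| := abs_add_le _ _
    _ = a * |Hf K p t ξ| + a * |∫ s in Ioi ξ, Rf K p t s| := by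
        rw [abs_neg, abs_mul, abs_mul, abs_of_pos ha]
    _ ≤ a * ξ ^ (-(1:ℝ)) + a * (M * ξ ^ (-(1:ℝ))) := by
        have := mul_le_mul_of_nonneg_left hHb ha.le
        have := mul_le_mul_of_nonneg_left hTb ha.le
        rw [hM] at *
        linarith
    _ ≤ (a * (1 + M) + 1) * ξ ^ (-(1:ℝ)) := by nlinarith

/-- for `0 < α < 2`, `a > 0`, `E > 0`, `t ∈ ℝ` and
`λ(s) = 2a sin²(2∫₀^s √(1-β_E) + 2t)/s`, there exist `c₀ ∈ ℝ`, `C > 0`, `ε > 0` such that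
`|∫₁^ξ λ(s) ds - a ln ξ + c₀| ≤ C ξ^{-ε}` for all `ξ ≥ 1`. -/
theorem stmt18 (α : ℝ) (hα0 : 0 < α) (hα2 : α < 2)
    (a : ℝ) (ha : 0 < a) (E : ℝ) (hE : 0 < E) (t : ℝ)
    (c : ℝ) (hc : c = (1 + α / 2) ^ ((2 : ℝ) / (2 + α)))
    (β : ℝ → ℝ) (hβ : ∀ x : ℝ, β x = -E / (c ^ α * x ^ (2 * α / (2 + α))))
    (lam : ℝ → ℝ)
    (hlam : ∀ s : ℝ, 1 ≤ s → lam s =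
      2 * a * (Real.sin (2 * (∫ x in (0 : ℝ)..s, Real.sqrt (1 - β x)) + 2 * t)) ^ 2 / s) :
    ∃ c₀ : ℝ, ∃ C > (0 : ℝ), ∃ ε > (0 : ℝ), ∀ ξ : ℝ, 1 ≤ ξ →
      |(∫ s in (1 : ℝ)..ξ, lam s) - a * Real.log ξ + c₀| ≤ C * ξ ^ (-ε) := by
  set p : ℝ := 2 * α / (2 + α) with hp
  have hp0 : 0 < p := div_pos (by linarith) (by linarith)
  have hp1 : p < 1 := (div_lt_one (by linarith)).2 (by linarith)
  have hcpos : 0 < c := by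
    rw [hc]; exact Real.rpow_pos_of_pos (by linarith) _
  have hca : 0 < c ^ α := Real.rpow_pos_of_pos hcpos α
  set K : ℝ := E / c ^ α with hK
  have hKpos : 0 < K := div_pos hE hca
  have hβ' : ∀ x : ℝ, 0 ≤ x → 1 - β x = 1 + K * x ^ (-p) := by
    intro x hx
    rcases hx.eq_or_lt with h | h
    · rw [hβ x, ← h, Real.zero_rpow hp0.ne', Real.zero_rpow (neg_ne_zero.mpr hp0.ne')]
      simp
    · rw [hβ x, Real.rpow_neg h.le]
      have hxp : 0 < x ^ p := Real.rpow_pos_of_pos h p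
      rw [hK]
      field_simp
      ring
  obtain ⟨c₀, C, hC, hbound⟩ := key K p a t hKpos hp0 hp1 ha β hβ'
  refine ⟨c₀, C, hC, 1, one_pos, fun ξ hξ => ?_⟩
  have hint : (∫ s in (1:ℝ)..ξ, lam s) = ∫ s in (1:ℝ)..ξ,
      2 * a * (Real.sin (2 * (∫ x in (0:ℝ)..s, Real.sqrt (1 - β x)) + 2 * t)) ^ 2 / s :=
    intervalIntegral.integral_congr fun s hs => by
      rw [uIcc_of_le hξ] at hs
      exact hlam s hs.1
  rw [hint]
  exact hbound ξ hξ
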